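/- Let χ¹ = χ² = [[i, 1-i],[1+i, -i]] (2×2, with scalar blocks χ₊₊ = i, χ₊₋ = 1-i, χ₋₊ = 1+i, χ₋₋ = -i) and a > 0. Then the star-product gluing formulas s₁₁ = χ₊₊ + χ₊₋·e^{-ka}·χ₋₋·e^{-ka}·(1 - χ₋₋e^{-ka}χ₋₋e^{-ka})⁻¹·χ₋₊ and s₂₁ = χ₊₋·e^{-ka}·(1 - χ₋₋e^{-ka}χ₋₋e^{-ka})⁻¹·χ₋₊ evaluate, for all k > 0, to s₁₁(k) = i·tanh(ka) and s₂₁(k) = 1/cosh(ka). -/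

import Mathlib

/-- Gluing two copies of the two-edge star graph (`χ₊₊ = i`, `χ₊₋ = 1-i`, `χ₋₊ = 1+i`,
`χ₋₋ = -i`) along the negative edges with edge length `a`: the star-product formulas
give `s₁₁(k) = i·tanh(ka)` and `s₂₁(k) = 1/cosh(ka)` for all `k > 0`. -/
theorem stmt_16 (a k : ℝ) (ha : 0 < a) (hk : 0 < k) :
    (Complex.I + (1 - Complex.I) * (Real.exp (-(k * a)) : ℂ) * (-Complex.I) *
        (Real.exp (-(k * a)) : ℂ) *
        (1 - (-Complex.I) * (Real.exp (-(k * a)) : ℂ) * (-Complex.I) *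
          (Real.exp (-(k * a)) : ℂ))⁻¹ * (1 + Complex.I)
      = Complex.I * (Real.tanh (k * a) : ℂ)) ∧
    ((1 - Complex.I) * (Real.exp (-(k * a)) : ℂ) *
        (1 - (-Complex.I) * (Real.exp (-(k * a)) : ℂ) * (-Complex.I) *
          (Real.exp (-(k * a)) : ℂ))⁻¹ * (1 + Complex.I)
      = 1 / (Real.cosh (k * a) : ℂ)) := by
  set x := k * a with hx
  set e : ℝ := Real.exp (-x) with he
  have he0 : (0:ℝ) < e := Real.exp_pos _
  have hmul : Real.exp x * Real.exp (-x) = 1 := by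
    rw [← Real.exp_add]; simp
  -- real identities
  have htanh : Real.tanh x * (1 + e ^ 2) = 1 - e ^ 2 := by
    rw [Real.tanh_eq_sinh_div_cosh, Real.sinh_eq, Real.cosh_eq]
    have hc : Real.exp x + Real.exp (-x) ≠ 0 := by positivity
    rw [he]
    field_simp
    linear_combination (2 * Real.exp (-x)) * hmul
  have hcosh : Real.cosh x * (2 * e) = 1 + e ^ 2 := by
    rw [Real.cosh_eq, he]
    field_simp
    linear_combination hmul
  -- complex denominator
  have hden : (1 : ℂ) - (-Complex.I) * (e : ℂ) * (-Complex.I) * (e : ℂ)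
      = 1 + (e : ℂ) ^ 2 := by
    linear_combination -(e:ℂ)^2 * Complex.I_sq
  have hne : (1 : ℂ) + (e : ℂ) ^ 2 ≠ 0 := by
    intro h
    have : (1 : ℝ) + e ^ 2 = 0 := by exact_mod_cast h
    nlinarith
  have h1 := congrArg (Complex.ofReal) htanh
  push_cast at h1
  have h2 := congrArg (Complex.ofReal) hcosh
  push_cast at h2
  have hc0 : (Real.cosh x : ℂ) ≠ 0 :=
    Complex.ofReal_ne_zero.mpr (ne_of_gt (Real.cosh_pos x))
  constructor
  · rw [hden, eq_comm, ← sub_eq_zero]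
    field_simp
    push_cast
    linear_combination Complex.I * h1 - Complex.I*(e:ℂ)^2 * Complex.I_sq
  · rw [hden, eq_comm, div_eq_iff hc0, ← sub_eq_zero]
    field_simp
    push_cast
    linear_combination -h2 + (e:ℂ) * Complex.cosh x * Complex.I_sq
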